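/- arXiv:1509.08007 — 2 statements merged into one kernel-verified Lean document; each statement's English description precedes it below -/
import Mathlib

section
/- Let A be a real symmetric m×m matrix and A⁺ its projection onto the PSD cone (obtained by replacing negative eigenvalues with zero in an orthogonal eigendecomposition). Then for every positive semidefinite matrix P, ‖A − P‖_F ≥ ‖A − A⁺‖_F; i.e., A⁺ is the Frobenius-norm-nearest PSD matrix to A. -/
open Matrix

noncomputable def frobNorm {m : ℕ} (M : Matrix (Fin m) (Fin m) ℝ) : ℝ :=
  Real.sqrt (∑ i, ∑ j, (M i j) ^ 2)

lemma frobSq_eq_trace {m : ℕ} (M : Matrix (Fin m) (Fin m) ℝ) :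
    ∑ i, ∑ j, (M i j) ^ 2 = (Mᵀ * M).trace := by
  rw [Matrix.trace]
  rw [Finset.sum_comm]
  congr 1; ext j
  simp [Matrix.mul_apply, Matrix.diag, sq]

lemma frobSq_conj {m : ℕ} (B M : Matrix (Fin m) (Fin m) ℝ) (hB : B * Bᵀ = 1) :
    ∑ i, ∑ j, ((B * M * Bᵀ) i j) ^ 2 = ∑ i, ∑ j, (M i j) ^ 2 := by
  have hB' : Bᵀ * B = 1 := mul_eq_one_comm.mp hB
  rw [frobSq_eq_trace, frobSq_eq_trace]
  have : (B * M * Bᵀ)ᵀ * (B * M * Bᵀ) = B * (Mᵀ * M) * Bᵀ := by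
    simp only [Matrix.transpose_mul, Matrix.transpose_transpose, Matrix.mul_assoc]
    rw [← Matrix.mul_assoc Bᵀ B, hB', Matrix.one_mul]
  rw [this, Matrix.trace_mul_comm, ← Matrix.mul_assoc, hB', Matrix.one_mul]

/-- A⁺ is the Frobenius-nearest PSD matrix to the symmetric matrix A. -/
theorem pos_part_nearest_psd {m : ℕ} (A B L Aplus : Matrix (Fin m) (Fin m) ℝ)
    (hAsymm : A.IsSymm) (hB : B * Bᵀ = 1) (lam : Fin m → ℝ)
    (hL : L = Matrix.diagonal lam) (hdecomp : A = B * L * Bᵀ)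
    (hAplus : Aplus = B * Matrix.diagonal (fun i => max (lam i) 0) * Bᵀ) :
    ∀ P : Matrix (Fin m) (Fin m) ℝ, P.PosSemidef →
      frobNorm (A - Aplus) ≤ frobNorm (A - P) := by
  intro P hP
  have hB' : Bᵀ * B = 1 := mul_eq_one_comm.mp hB
  set Q : Matrix (Fin m) (Fin m) ℝ := Bᵀ * P * B with hQ
  have hQpsd : Q.PosSemidef := by
    have := hP.conjTranspose_mul_mul_same B
    simpa using this
  have hQdiag : ∀ i, 0 ≤ Q i i := fun i => by
    exact hQpsd.diag_nonneg
  -- rewrite A - P and A - Aplus as conjugations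
  have hAP : A - P = B * (L - Q) * Bᵀ := by
    rw [hdecomp, hQ]
    have : B * (Bᵀ * P * B) * Bᵀ = P := by
      calc B * (Bᵀ * P * B) * Bᵀ = (B * Bᵀ) * P * (B * Bᵀ) := by
            simp only [Matrix.mul_assoc]
        _ = P := by rw [hB]; simp
    rw [Matrix.mul_sub, Matrix.sub_mul, this]
  have hAA : A - Aplus = B * (L - Matrix.diagonal (fun i => max (lam i) 0)) * Bᵀ := by
    rw [hdecomp, hAplus, Matrix.mul_sub, Matrix.sub_mul]
  unfold frobNorm
  apply Real.sqrt_le_sqrt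
  rw [hAP, hAA, frobSq_conj _ _ hB, frobSq_conj _ _ hB]
  -- now compare sums
  have key : ∀ i j, ((L - Matrix.diagonal (fun i => max (lam i) 0)) i j) ^ 2
      ≤ if i = j then (lam i - Q i i) ^ 2 else 0 := by
    intro i j
    rw [hL]
    by_cases h : i = j
    · subst h
      rw [if_pos rfl]
      simp only [Matrix.sub_apply, Matrix.diagonal_apply_eq]
      have hq := hQdiag i
      rcases le_or_gt (lam i) 0 with hl | hl
      · rw [max_eq_right hl]; nlinarith
      · rw [max_eq_left hl.le]; nlinarith
    · simp [Matrix.sub_apply, Matrix.diagonal_apply_ne _ h, h]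
  calc ∑ i, ∑ j, ((L - Matrix.diagonal (fun i => max (lam i) 0)) i j) ^ 2
      ≤ ∑ i, ∑ j, (if i = j then (lam i - Q i i) ^ 2 else 0) := by
        apply Finset.sum_le_sum; intro i _
        apply Finset.sum_le_sum; intro j _
        exact key i j
    _ = ∑ i, (lam i - Q i i) ^ 2 := by simp
    _ ≤ ∑ i, ∑ j, ((L - Q) i j) ^ 2 := by
        apply Finset.sum_le_sum; intro i _
        have : (lam i - Q i i) ^ 2 = ((L - Q) i i) ^ 2 := by
          rw [hL]; simp [Matrix.sub_apply]
        rw [this]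
        exact Finset.single_le_sum (f := fun j => ((L - Q) i j) ^ 2)
          (fun j _ => sq_nonneg _) (Finset.mem_univ i)
end

section
/- Let X ⊆ ℝⁿ be nonempty closed convex, f : ℝⁿ → ℝ continuous, X* = argmin_{x∈X} f(x) nonempty, and let {z_k} ⊆ X be a bounded sequence such that (i) for every x* ∈ X*, ‖z_k − x*‖ converges, and (ii) liminf_k f(z_k) ≤ f(x*) for x* ∈ X*. Then {z_k} converges to some point of X*. -/
/-- A bounded quasi-Fejér monotone sequence with an optimal accumulation point
converges to a minimizer. -/
theorem quasi_fejer_convergence {n : ℕ} (X : Set (EuclideanSpace ℝ (Fin n)))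
    (hne : X.Nonempty) (hclosed : IsClosed X) (hconv : Convex ℝ X)
    (f : EuclideanSpace ℝ (Fin n) → ℝ) (hf : Continuous f)
    (Xstar : Set (EuclideanSpace ℝ (Fin n)))
    (hXstar : Xstar = {x ∈ X | ∀ y ∈ X, f x ≤ f y}) (hXsne : Xstar.Nonempty)
    (z : ℕ → EuclideanSpace ℝ (Fin n)) (hzX : ∀ k, z k ∈ X)
    (hbdd : ∃ M, ∀ k, ‖z k‖ ≤ M)
    (hfejer : ∀ xs ∈ Xstar, ∃ L, Filter.Tendsto (fun k => ‖z k - xs‖) Filter.atTop (nhds L))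
    (hliminf : ∀ xs ∈ Xstar, Filter.liminf (fun k => f (z k)) Filter.atTop ≤ f xs) :
    ∃ xs ∈ Xstar, Filter.Tendsto z Filter.atTop (nhds xs) := by
  obtain ⟨x0, hx0⟩ := hXsne
  obtain ⟨M, hM⟩ := hbdd
  -- z lives in a compact ball
  have hball : ∀ k, z k ∈ Metric.closedBall (0 : EuclideanSpace ℝ (Fin n)) M := by
    intro k; simpa [Metric.mem_closedBall, dist_eq_norm] using hM k
  -- f is bounded on the ball
  obtain ⟨C, hC⟩ := (isCompact_closedBall (0 : EuclideanSpace ℝ (Fin n)) M).exists_bound_of_continuousOn hf.continuousOn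
  have hfb : ∀ k, f (z k) ≤ C := fun k => (le_abs_self _).trans
    (by simpa using hC (z k) (hball k))
  have hcobdd : Filter.IsCoboundedUnder (· ≥ ·) Filter.atTop (fun k => f (z k)) :=
    Filter.IsBoundedUnder.isCoboundedUnder_ge ⟨C, Filter.eventually_atTop.2 ⟨0, fun k _ => hfb k⟩⟩
  -- frequently f (z k) < f x0 + 1/(m+1)
  have hfreq : ∀ m : ℕ, ∃ᶠ k in Filter.atTop, f (z k) < f x0 + 1 / (m + 1) := by
    intro m
    apply Filter.frequently_lt_of_liminf_lt hcobdd
    have : (0:ℝ) < 1 / (m + 1) := by positivity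
    linarith [hliminf x0 hx0]
  obtain ⟨ψ, hψmono, hψ⟩ := Filter.extraction_forall_of_frequently hfreq
  -- extract convergent subsequence
  obtain ⟨w, -, φ, hφmono, hφlim⟩ := tendsto_subseq_of_bounded
    (Metric.isBounded_closedBall (x := (0 : EuclideanSpace ℝ (Fin n))) (r := M))
    (fun k => hball (ψ k))
  have hwX : w ∈ X := hclosed.mem_of_tendsto hφlim
    (Filter.Eventually.of_forall fun k => hzX _)
  -- f w ≤ f x0
  have hfw : f w ≤ f x0 := by
    have h1 : Filter.Tendsto (fun k => f (z (ψ (φ k)))) Filter.atTop (nhds (f w)) :=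
      (hf.tendsto w).comp hφlim
    have h2 : Filter.Tendsto (fun k : ℕ => f x0 + 1 / ((k:ℝ) + 1)) Filter.atTop (nhds (f x0)) := by
      simpa using tendsto_const_nhds.add (tendsto_one_div_add_atTop_nhds_zero_nat : Filter.Tendsto (fun k : ℕ => 1 / ((k:ℝ) + 1)) Filter.atTop (nhds 0))
    refine le_of_tendsto_of_tendsto h1 h2 (Filter.Eventually.of_forall fun k => ?_)
    have := hψ (φ k)
    have hle : (1:ℝ) / (φ k + 1) ≤ 1 / (k + 1) := by
      have hk : (k:ℝ) ≤ φ k := by exact_mod_cast hφmono.id_le k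
      exact one_div_le_one_div_of_le (by positivity) (by linarith)
    exact le_trans (le_of_lt this) (by linarith)
  have hwXs : w ∈ Xstar := by
    rw [hXstar]
    exact ⟨hwX, fun y hy => le_trans hfw ((hXstar ▸ hx0).2 y hy)⟩
  -- norm convergence
  obtain ⟨L, hL⟩ := hfejer w hwXs
  have hsub : Filter.Tendsto (fun k => ‖z (ψ (φ k)) - w‖) Filter.atTop (nhds L) :=
    hL.comp ((hψmono.comp hφmono).tendsto_atTop)
  have hsub0 : Filter.Tendsto (fun k => ‖z (ψ (φ k)) - w‖) Filter.atTop (nhds 0) := by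
    have : Filter.Tendsto (fun k => z (ψ (φ k)) - w) Filter.atTop (nhds 0) := by
      simpa using hφlim.sub (tendsto_const_nhds (x := w))
    simpa [Function.comp_def] using (continuous_norm.tendsto (0 : EuclideanSpace ℝ (Fin n))).comp this
  have hL0 : L = 0 := tendsto_nhds_unique hsub hsub0
  refine ⟨w, hwXs, ?_⟩
  rw [← tendsto_sub_nhds_zero_iff]
  rw [tendsto_zero_iff_norm_tendsto_zero]
  simpa [hL0] using hL
end
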